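/- arXiv:1807.01003 — 2 statements merged into one kernel-verified Lean document; each statement's English description precedes it below -/
import Mathlib

section
/- Let X be an Archimedean partially ordered vector space with generating cone. If V is a vector subspace of X such that X = V + V^⊥, then V ∩ V^⊥ = {0} and the projection onto V along V^⊥ is positive with positive complement; in particular V is a projection band. -/
/-- Two vectors are disjoint: the upper bounds of {x+y, -x-y} equal those of {x-y, y-x}. -/
def Disj {X : Type*} [AddCommGroup X] [PartialOrder X] (x y : X) : Prop :=
  upperBounds ({x + y, -x - y} : Set X) = upperBounds ({x - y, y - x} : Set X)


/-- The disjoint complement of a set. -/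
def DisjComp {X : Type*} [AddCommGroup X] [PartialOrder X] (S : Set X) : Set X :=
  {x | ∀ y ∈ S, Disj x y}

section
variable {X : Type*} [AddCommGroup X] [PartialOrder X] [IsOrderedAddMonoid X]

theorem tle {u p q : X} (e : q = p) (h : p ≤ u) : q ≤ u := e ▸ h

theorem disj_iff {x y : X} : Disj x y ↔
    ∀ u : X, (x + y ≤ u ∧ -x - y ≤ u) ↔ (x - y ≤ u ∧ y - x ≤ u) := by
  constructor
  · intro h u; simpa [upperBounds] using Set.ext_iff.mp h u
  · intro h; ext u; simpa [upperBounds] using h u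

theorem disj_shift {x y : X} (h : Disj x y) (t u : X) :
    (x + y + t ≤ u ∧ -x - y + t ≤ u) ↔ (x - y + t ≤ u ∧ y - x + t ≤ u) := by
  have H := disj_iff.mp h (u - t)
  simpa [le_sub_iff_add_le] using H


theorem disj_symm {x y : X} (h : Disj x y) : Disj y x := by
  rw [disj_iff] at h ⊢
  intro u
  constructor
  · intro ⟨h1, h2⟩
    have := (h u).mp ⟨tle (by abel) h1, tle (by abel) h2⟩
    exact ⟨tle (by abel) this.2, tle (by abel) this.1⟩
  · intro ⟨h1, h2⟩
    have := (h u).mpr ⟨tle (by abel) h2, tle (by abel) h1⟩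
    exact ⟨tle (by abel) this.1, tle (by abel) this.2⟩

theorem disj_neg_right {x y : X} (h : Disj x y) : Disj x (-y) := by
  rw [disj_iff] at h ⊢
  intro u
  constructor
  · intro ⟨h1, h2⟩
    have := (h u).mpr ⟨tle (by abel) h1, tle (by abel) h2⟩
    exact ⟨tle (by abel) this.1, tle (by abel) this.2⟩
  · intro ⟨h1, h2⟩
    have := (h u).mp ⟨tle (by abel) h1, tle (by abel) h2⟩
    exact ⟨tle (by abel) this.1, tle (by abel) this.2⟩

theorem disj_neg_left {x y : X} (h : Disj x y) : Disj (-x) y :=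
  disj_symm (disj_neg_right (disj_symm h))

theorem disj_zero_left (y : X) : Disj 0 y := by
  rw [disj_iff]; intro u
  constructor
  · intro ⟨h1, h2⟩; exact ⟨tle (by abel) h2, tle (by abel) h1⟩
  · intro ⟨h1, h2⟩; exact ⟨tle (by abel) h2, tle (by abel) h1⟩

end

section
variable {X : Type*} [AddCommGroup X] [PartialOrder X] [IsOrderedAddMonoid X] [Module ℝ X]
  [PosSMulStrictMono ℝ X] [PosSMulReflectLT ℝ X]

theorem key_le
    (harch : ∀ x y : X, (∀ n : ℕ, 0 < n → n • x ≤ y) → x ≤ 0)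
    (hgen : ∀ x : X, ∃ a b : X, 0 ≤ a ∧ 0 ≤ b ∧ x = a - b)
    {a b c d : X} (ha : Disj a d) (hb : Disj b d) (hc : Disj c d)
    (heq : a + b = c + d) : d ≤ 0 := by
  obtain ⟨pa, qa, hpa, hqa, haeq⟩ := hgen a
  obtain ⟨pb, qb, hpb, hqb, hbeq⟩ := hgen b
  set u := pa + qa + (pb + qb) with hu
  have ua1 : a ≤ pa + qa := by
    rw [haeq, sub_eq_add_neg]
    exact add_le_add le_rfl (le_trans (neg_nonpos_of_nonneg hqa) hqa)
  have ua2 : -a ≤ pa + qa := by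
    rw [haeq, neg_sub, sub_eq_add_neg, add_comm pa qa]
    exact add_le_add le_rfl (le_trans (neg_nonpos_of_nonneg hpa) hpa)
  have ub1 : b ≤ pb + qb := by
    rw [hbeq, sub_eq_add_neg]
    exact add_le_add le_rfl (le_trans (neg_nonpos_of_nonneg hqb) hqb)
  have ub2 : -b ≤ pb + qb := by
    rw [hbeq, neg_sub, sub_eq_add_neg, add_comm pb qb]
    exact add_le_add le_rfl (le_trans (neg_nonpos_of_nonneg hpb) hpb)
  have hc' : c = a + b - d := eq_sub_of_add_eq heq.symm
  have main : ∀ n : ℕ, a + b + (2*n) • d ≤ u ∧ ((2*n) • d - a - b ≤ u ∧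
      (a - b + (2*n) • d ≤ u ∧ b - a + (2*n) • d ≤ u)) := by
    intro n
    induction n with
    | zero =>
      simp only [Nat.mul_zero, zero_smul, add_zero, sub_zero, zero_sub]
      refine ⟨add_le_add ua1 ub1, ?_, ?_, ?_⟩
      · exact tle (by abel) (add_le_add ua2 ub2)
      · exact tle (by abel) (add_le_add ua1 ub2)
      · exact tle (by abel) (add_le_add ua2 ub1)
    | succ n ih =>
      obtain ⟨P1, P2, P3, P4⟩ := ih
      set t := (2*n) • d with ht
      have step1 := (disj_shift hc t u).mp
        ⟨tle (by rw [heq]) P1, tle (by rw [hc']; abel) P2⟩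
      have N2 : (2:ℕ) • d - a - b + t ≤ u := tle (by rw [hc']; abel) step1.2
      have step2 := (disj_shift hb (d - a + t) u).mpr
        ⟨tle (by abel) P4, tle (by rw [two_nsmul] at N2 ⊢; abel) N2⟩
      have N4 : b - a + (2:ℕ) • d + t ≤ u := tle (by rw [two_nsmul]; abel) step2.1
      have step3 := (disj_shift ha (d - b + t) u).mpr
        ⟨tle (by abel) P3, tle (by rw [two_nsmul] at N2 ⊢; abel) N2⟩
      have N3 : a - b + (2:ℕ) • d + t ≤ u := tle (by rw [two_nsmul]; abel) step3.1
      have step4 := (disj_shift ha (b + d + t) u).mpr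
        ⟨tle (by abel) P1, tle (by rw [two_nsmul] at N4 ⊢; abel) N4⟩
      have N1 : a + b + (2:ℕ) • d + t ≤ u := tle (by rw [two_nsmul]; abel) step4.1
      have hconv : (2*(n+1)) • d = t + (2:ℕ) • d := by rw [ht, Nat.mul_succ, add_nsmul]
      refine ⟨?_, ?_, ?_, ?_⟩
      · rw [hconv]; exact tle (by abel) N1
      · rw [hconv]; exact tle (by rw [two_nsmul] at N2 ⊢; abel) N2
      · rw [hconv]; exact tle (by abel) N3
      · rw [hconv]; exact tle (by abel) N4
  have h2d : (2:ℕ) • d ≤ 0 := by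
    apply harch _ (u - (a + b))
    intro n _
    have e : n • ((2:ℕ) • d) = (2*n) • d := by rw [smul_smul, Nat.mul_comm]
    rw [le_sub_iff_add_le, e, add_comm]
    exact (main n).1
  have h2d' : (2:ℝ) • d ≤ 0 := by
    rw [two_smul]; rw [two_nsmul] at h2d; exact h2d
  have := smul_le_smul_of_nonneg_left h2d' (by norm_num : (0:ℝ) ≤ 1/2)
  rwa [smul_smul, smul_zero, (by norm_num : (1/2:ℝ)*2 = 1), one_smul] at this


theorem disj_smul {c : ℝ} (hc : 0 < c) {x y : X} (h : Disj x y) : Disj (c • x) (c • y) := by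
  rw [disj_iff] at h ⊢
  intro u
  have key : ∀ z : X, c • z ≤ u ↔ z ≤ c⁻¹ • u := by
    intro z
    constructor
    · intro hz
      have := smul_le_smul_of_nonneg_left hz (le_of_lt (inv_pos.mpr hc))
      rwa [inv_smul_smul₀ (ne_of_gt hc)] at this
    · intro hz
      have := smul_le_smul_of_nonneg_left hz (le_of_lt hc)
      rwa [smul_inv_smul₀ (ne_of_gt hc)] at this
  have e1 : c • x + c • y = c • (x + y) := (smul_add c x y).symm
  have e2 : -(c • x) - c • y = c • (-x - y) := by rw [smul_sub, smul_neg]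
  have e3 : c • x - c • y = c • (x - y) := (smul_sub c x y).symm
  have e4 : c • y - c • x = c • (y - x) := (smul_sub c y x).symm
  rw [e1, e2, e3, e4, key, key, key, key]
  exact h (c⁻¹ • u)

theorem key_eq
    (harch : ∀ x y : X, (∀ n : ℕ, 0 < n → n • x ≤ y) → x ≤ 0)
    (hgen : ∀ x : X, ∃ a b : X, 0 ≤ a ∧ 0 ≤ b ∧ x = a - b)
    {a b c d : X} (ha : Disj a d) (hb : Disj b d) (hc : Disj c d)
    (heq : a + b = c + d) : d = 0 := by
  have h1 := key_le harch hgen ha hb hc heq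
  have heq2 : c + -b = a + -d := by
    have h : a = c + d - b := by rw [eq_sub_iff_add_eq, heq]
    rw [h]; abel
  have h2 := key_le harch hgen (disj_neg_right hc)
    (disj_neg_left (disj_neg_right hb)) (disj_neg_right ha) heq2
  exact le_antisymm h1 (neg_nonpos.mp h2)

omit [PosSMulStrictMono ℝ X] [PosSMulReflectLT ℝ X] in
theorem half_eq (v : X) : (1/2 : ℝ) • (v + v) = v := by
  rw [← two_smul ℝ v, smul_smul]; norm_num

end


theorem subspace_projection_band {X : Type*} [AddCommGroup X] [PartialOrder X] [IsOrderedAddMonoid X]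
    [Module ℝ X]
    [PosSMulStrictMono ℝ X] [PosSMulReflectLT ℝ X]
    (harch : ∀ x y : X, (∀ n : ℕ, 0 < n → n • x ≤ y) → x ≤ 0)
    (hgen : ∀ x : X, ∃ a b : X, 0 ≤ a ∧ 0 ≤ b ∧ x = a - b)
    (V : Submodule ℝ X)
    (hsum : ∀ x : X, ∃ v ∈ V, ∃ w ∈ DisjComp (V : Set X), x = v + w) :
    (V : Set X) ∩ DisjComp (V : Set X) = {0} ∧
    (∃ P : X →ₗ[ℝ] X, P ∘ₗ P = P ∧ LinearMap.range P = V ∧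
      (∀ w ∈ DisjComp (V : Set X), P w = 0) ∧
      (∀ x : X, 0 ≤ x → 0 ≤ P x ∧ P x ≤ x)) ∧
    DisjComp (DisjComp (V : Set X)) = (V : Set X) := by
  -- an element of V ∩ V^⊥ is zero
  have hzero : ∀ x : X, x ∈ V → x ∈ DisjComp (V : Set X) → x = 0 := by
    intro x hxV hxW
    have hd : Disj x x := hxW x hxV
    have H := (disj_iff.mp hd 0).mpr ⟨by simp, by simp⟩
    have hxx : x + x = 0 := le_antisymm H.1 (by
      have h2 := H.2
      have : -(x + x) ≤ 0 := tle (by abel) h2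
      exact neg_nonpos.mp this)
    calc x = (1/2 : ℝ) • (x + x) := (half_eq x).symm
    _ = 0 := by rw [hxx, smul_zero]
  -- V^⊥ is a submodule
  let W : Submodule ℝ X :=
    { carrier := DisjComp (V : Set X)
      zero_mem' := fun y _ => disj_zero_left y
      add_mem' := by
        intro w1 w2 h1 h2
        obtain ⟨v, hv, w, hw, hxe⟩ := hsum (w1 + w2)
        have hv0 : v = 0 := key_eq harch hgen (h1 v hv) (h2 v hv) (hw v hv)
          (by rw [hxe, add_comm])
        rw [hv0, zero_add] at hxe
        show w1 + w2 ∈ DisjComp (V : Set X)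
        rw [hxe]; exact hw
      smul_mem' := by
        intro c x hx
        show c • x ∈ DisjComp (V : Set X)
        rcases lt_trichotomy c 0 with hlt | h0 | hgt
        · intro y hy
          have hpos : 0 < -c := neg_pos.mpr hlt
          have hy' : (-c)⁻¹ • y ∈ V := V.smul_mem _ hy
          have h := disj_smul hpos (hx _ hy')
          rw [smul_inv_smul₀ (ne_of_gt hpos)] at h
          have h' := disj_neg_left h
          rwa [neg_smul, neg_neg] at h'
        · rw [h0, zero_smul]; exact fun y _ => disj_zero_left y
        · intro y hy
          have hy' : c⁻¹ • y ∈ V := V.smul_mem _ hy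
          have h := disj_smul hgt (hx _ hy')
          rwa [smul_inv_smul₀ (ne_of_gt hgt)] at h }
  have hWmem : ∀ x : X, x ∈ W ↔ x ∈ DisjComp (V : Set X) := fun _ => Iff.rfl
  have hdisj : V ⊓ W = ⊥ := by
    rw [eq_bot_iff]
    intro x hx
    rw [Submodule.mem_bot]
    exact hzero x hx.1 hx.2
  have hsup : V ⊔ W = ⊤ := by
    rw [eq_top_iff]
    intro x _
    obtain ⟨v, hv, w, hw, he⟩ := hsum x
    rw [he]
    exact Submodule.add_mem_sup hv ((hWmem w).mpr hw)
  have hcompl : IsCompl V W := ⟨disjoint_iff.mpr hdisj, codisjoint_iff.mpr hsup⟩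
  let P : X →ₗ[ℝ] X := V.subtype ∘ₗ Submodule.projectionOnto V W hcompl
  have hPV : ∀ v : X, v ∈ V → P v = v := by
    intro v hv
    show (V.subtype) (Submodule.projectionOnto V W hcompl v) = v
    rw [show v = ((⟨v, hv⟩ : V) : X) from rfl,
      Submodule.projectionOnto_apply_left hcompl ⟨v, hv⟩]
    rfl
  have hPW : ∀ w : X, w ∈ DisjComp (V : Set X) → P w = 0 := by
    intro w hw
    show (V.subtype) (Submodule.projectionOnto V W hcompl w) = 0
    rw [show w = ((⟨w, (hWmem w).mpr hw⟩ : W) : X) from rfl,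
      Submodule.projectionOnto_apply_right hcompl ⟨w, _⟩]
    rfl
  have hPmem : ∀ x : X, P x ∈ V := fun x =>
    (Submodule.projectionOnto V W hcompl x).2
  refine ⟨?_, ⟨P, ?_, ?_, hPW, ?_⟩, ?_⟩
  · ext x
    simp only [Set.mem_inter_iff, Set.mem_singleton_iff]
    constructor
    · rintro ⟨hxV, hxW⟩; exact hzero x hxV hxW
    · rintro rfl
      exact ⟨V.zero_mem, fun y _ => disj_zero_left y⟩
  · ext x
    exact hPV (P x) (hPmem x)
  · apply le_antisymm
    · rintro y ⟨x, rfl⟩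
      exact hPmem x
    · intro v hv
      exact ⟨v, hPV v hv⟩
  · intro x hx
    obtain ⟨v, hv, w, hw, he⟩ := hsum x
    have hPx : P x = v := by
      rw [he, map_add, hPV v hv, hPW w hw, add_zero]
    have hd : Disj w v := hw v hv
    have H := (disj_iff.mp hd x).mp
      ⟨le_of_eq ((add_comm w v).trans he.symm),
       tle (show -w - v = -x by rw [he]; abel)
         (le_trans (neg_nonpos_of_nonneg hx) hx)⟩
    have h1 : w - v ≤ v + w := he ▸ H.1
    have h2 : v - w ≤ v + w := he ▸ H.2
    have hv0 : (0:X) ≤ v + v := by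
      calc (0:X) = w - v + (v - w) := by abel
      _ ≤ v + w + (v - w) := add_le_add_left h1 (v - w)
      _ = v + v := by abel
    have hw0 : (0:X) ≤ w + w := by
      calc (0:X) = v - w + (w - v) := by abel
      _ ≤ v + w + (w - v) := add_le_add_left h2 (w - v)
      _ = w + w := by abel
    constructor
    · rw [hPx]
      calc (0:X) = (1/2 : ℝ) • (0:X) := (smul_zero _).symm
      _ ≤ (1/2 : ℝ) • (v + v) := smul_le_smul_of_nonneg_left hv0 (by norm_num)
      _ = v := half_eq v
    · rw [hPx, he]
      have : (0:X) ≤ w := by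
        calc (0:X) = (1/2 : ℝ) • (0:X) := (smul_zero _).symm
        _ ≤ (1/2 : ℝ) • (w + w) := smul_le_smul_of_nonneg_left hw0 (by norm_num)
        _ = w := half_eq w
      exact le_add_of_nonneg_right this
  · ext x
    simp only [SetLike.mem_coe]
    constructor
    · intro hx
      obtain ⟨v, hv, w, hw, he⟩ := hsum x
      have hw0 : w = 0 := key_eq harch hgen (a := x) (b := -v) (c := 0) (d := w)
        (hx w hw) (disj_neg_left (disj_symm (hw v hv))) (disj_zero_left w)
        (by rw [he]; abel)
      rw [he, hw0, add_zero]
      exact hv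
    · intro hv y hy
      exact disj_symm (hy x hv)
end

section
/- Let X be an Archimedean partially ordered vector space with generating cone, and let P₁, P₂ be linear projections on X with P₁, I - P₁, P₂, I - P₂ all positive. If the ranges of P₁ and P₂ are disjoint complements of each other (P₂(X) = (P₁(X))^⊥), then P₁ + P₂ = I. -/
private lemma mem_ub_pair {X : Type*} [AddCommGroup X] [PartialOrder X] (a b w : X) :
    w ∈ upperBounds ({a, b} : Set X) ↔ a ≤ w ∧ b ≤ w := by
  constructor
  · intro h
    exact ⟨h (Set.mem_insert _ _), h (Set.mem_insert_of_mem _ rfl)⟩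
  · rintro ⟨h1, h2⟩ x hx
    rcases hx with hx | hx
    · exact hx ▸ h1
    · exact hx ▸ h2

theorem complementary_band_projections_sum {X : Type*} [AddCommGroup X] [PartialOrder X] [IsOrderedAddMonoid X] [Module ℝ X]
    [PosSMulStrictMono ℝ X] [PosSMulReflectLT ℝ X]
    (harch : ∀ x y : X, (∀ n : ℕ, 0 < n → n • x ≤ y) → x ≤ 0)
    (hgen : ∀ x : X, ∃ a b : X, 0 ≤ a ∧ 0 ≤ b ∧ x = a - b)
    (P₁ P₂ : X →ₗ[ℝ] X) (hP₁ : P₁ ∘ₗ P₁ = P₁) (hP₂ : P₂ ∘ₗ P₂ = P₂)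
    (hP₁pos : ∀ x : X, 0 ≤ x → 0 ≤ P₁ x) (hP₁compl : ∀ x : X, 0 ≤ x → 0 ≤ x - P₁ x)
    (hP₂pos : ∀ x : X, 0 ≤ x → 0 ≤ P₂ x) (hP₂compl : ∀ x : X, 0 ≤ x → 0 ≤ x - P₂ x)
    (hranges : Set.range P₂ = DisjComp (Set.range P₁)) :
    P₁ + P₂ = LinearMap.id := by
  -- idempotency pointwise
  have hP1idem : ∀ x : X, P₁ (P₁ x) = P₁ x := fun x => LinearMap.congr_fun hP₁ x
  have hP2idem : ∀ x : X, P₂ (P₂ x) = P₂ x := fun x => LinearMap.congr_fun hP₂ x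
  -- monotonicity of P₁ and of Q = I - P₁
  have mono1 : ∀ a b : X, a ≤ b → P₁ a ≤ P₁ b := by
    intro a b hab
    have h := hP₁pos (b - a) (sub_nonneg.mpr hab)
    rw [map_sub] at h
    exact sub_nonneg.mp h
  have monoQ : ∀ a b : X, a ≤ b → a - P₁ a ≤ b - P₁ b := by
    intro a b hab
    have h := hP₁compl (b - a) (sub_nonneg.mpr hab)
    rw [map_sub] at h
    have e : (b - a) - (P₁ b - P₁ a) = (b - P₁ b) - (a - P₁ a) := by abel
    rw [e] at h
    exact sub_nonneg.mp h
  -- recombination: bounds on Q-part and P₁-part add up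
  have key : ∀ a b w : X, a ≤ w - P₁ w → b ≤ P₁ w → a + b ≤ w := by
    intro a b w h1 h2
    have h := add_le_add h1 h2
    rwa [sub_add_cancel] at h
  -- L1 : ker P₁ is elementwise disjoint from the fixed points of P₁
  have L1 : ∀ d u : X, P₁ d = 0 → P₁ u = u → Disj d u := by
    intro d u hd hu
    unfold Disj
    ext w
    rw [mem_ub_pair, mem_ub_pair]
    constructor
    · rintro ⟨h1, h2⟩
      -- h1 : d + u ≤ w, h2 : -d - u ≤ w
      have q1 : d ≤ w - P₁ w := by
        have := monoQ _ _ h1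
        rw [map_add, hd, hu] at this
        have e : (d + u) - (0 + u) = d := by abel
        rwa [e] at this
      have q2 : -d ≤ w - P₁ w := by
        have := monoQ _ _ h2
        rw [map_sub, map_neg, hd, hu] at this
        have e : (-d - u) - (-0 - u) = -d := by abel
        rwa [e] at this
      have p1 : u ≤ P₁ w := by
        have := mono1 _ _ h1
        rwa [map_add, hd, hu, zero_add] at this
      have p2 : -u ≤ P₁ w := by
        have := mono1 _ _ h2
        rw [map_sub, map_neg, hd, hu, neg_zero, zero_sub] at this
        exact this
      refine ⟨?_, ?_⟩
      · have h := key _ _ _ q1 p2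
        have e : d + -u = d - u := by abel
        rwa [e] at h
      · have h := key _ _ _ q2 p1
        have e : -d + u = u - d := by abel
        rwa [e] at h
    · rintro ⟨h1, h2⟩
      -- h1 : d - u ≤ w, h2 : u - d ≤ w
      have q1 : d ≤ w - P₁ w := by
        have := monoQ _ _ h1
        rw [map_sub, hd, hu] at this
        have e : (d - u) - (0 - u) = d := by abel
        rwa [e] at this
      have q2 : -d ≤ w - P₁ w := by
        have := monoQ _ _ h2
        rw [map_sub, hd, hu] at this
        have e : (u - d) - (u - 0) = -d := by abel
        rwa [e] at this
      have p1 : u ≤ P₁ w := by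
        have := mono1 _ _ h2
        rwa [map_sub, hd, hu, sub_zero] at this
      have p2 : -u ≤ P₁ w := by
        have := mono1 _ _ h1
        rw [map_sub, hd, hu, zero_sub] at this
        exact this
      refine ⟨key _ _ _ q1 p1, ?_⟩
      have h := key _ _ _ q2 p2
      have e : -d + -u = -d - u := by abel
      rwa [e] at h
  -- L2 : elements of the disjoint complement of range P₁ are in ker P₁ (Archimedean)
  have L2 : ∀ z : X, (∀ u ∈ Set.range P₁, Disj z u) → P₁ z = 0 := by
    intro z hz
    set a := P₁ z with ha
    have haidem : P₁ a = a := hP1idem z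
    obtain ⟨p, q, hp, hq, hzpq⟩ := hgen z
    set w := p + q with hw
    have hwz : z ≤ w := by
      rw [hzpq, hw]
      have h := add_le_add (le_refl p) (neg_le_self hq)
      simpa [sub_eq_add_neg] using h
    have hwz' : -z ≤ w := by
      rw [hzpq, hw]
      have h := add_le_add (neg_le_self hp) (le_refl q)
      have e : -(p - q) = -p + q := by abel
      rw [e]
      exact h
    -- disjointness from multiples of a
    have hdisj : ∀ m : ℕ, Disj z (m • a) := by
      intro m
      apply hz
      exact ⟨m • z, by rw [map_nsmul, ← ha]⟩
    -- main induction: w ≥ ±(z - 2n•a)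
    have main : ∀ n : ℕ, z - (2 * n) • a ≤ w ∧ (2 * n) • a - z ≤ w := by
      intro n
      induction n with
      | zero =>
        constructor
        · simpa using hwz
        · simpa using hwz'
      | succ n ih =>
        obtain ⟨ih1, ih2⟩ := ih
        set m : ℕ := 2 * n with hm
        have hdm := hdisj m
        unfold Disj at hdm
        have hmem : w ∈ upperBounds ({z - m • a, m • a - z} : Set X) :=
          (mem_ub_pair _ _ _).mpr ⟨ih1, ih2⟩
        rw [← hdm, mem_ub_pair] at hmem
        obtain ⟨h1, h2⟩ := hmem
        -- h1 : z + m • a ≤ w, h2 : -z - m • a ≤ w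
        have hPma : P₁ (m • a) = m • a := by rw [map_nsmul, haidem]
        have p1 : a + m • a ≤ P₁ w := by
          have := mono1 _ _ h1
          rwa [map_add, ← ha, hPma] at this
        have p2 : -(a + m • a) ≤ P₁ w := by
          have := mono1 _ _ h2
          rw [map_sub, map_neg, ← ha, hPma] at this
          have e : -a - m • a = -(a + m • a) := by abel
          rwa [e] at this
        have q1 : z - a ≤ w - P₁ w := by
          have := monoQ _ _ ih1
          rw [map_sub, ← ha, hPma] at this
          have e : (z - m • a) - (a - m • a) = z - a := by abel
          rwa [e] at this
        have q2 : a - z ≤ w - P₁ w := by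
          have := monoQ _ _ ih2
          rw [map_sub, ← ha, hPma] at this
          have e : (m • a - z) - (m • a - a) = a - z := by abel
          rwa [e] at this
        have hsmul : (2 * (n + 1)) • a = m • a + a + a := by
          rw [hm]
          have e : 2 * (n + 1) = 2 * n + 1 + 1 := by ring
          rw [e, succ_nsmul, succ_nsmul]
        constructor
        · have h := key _ _ _ q1 p2
          have e : z - a + -(a + m • a) = z - (m • a + a + a) := by abel
          rw [e] at h
          rwa [hsmul]
        · have h := key _ _ _ q2 p1
          have e : a - z + (a + m • a) = (m • a + a + a) - z := by abel
          rw [e] at h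
          rwa [hsmul]
    -- Archimedean step in both directions
    have h2a : (2 : ℕ) • a ≤ 0 := by
      apply harch _ (w + z)
      intro n _
      have h := (main n).2
      have e : n • ((2 : ℕ) • a) = (2 * n) • a := by rw [← mul_nsmul, Nat.mul_comm]
      rw [e]
      exact sub_le_iff_le_add.mp h
    have h2a' : (2 : ℕ) • (-a) ≤ 0 := by
      apply harch _ (w - z)
      intro n _
      have h := (main n).1
      have e : n • ((2 : ℕ) • (-a)) = -((2 * n) • a) := by
        rw [← mul_nsmul, Nat.mul_comm]
        exact neg_nsmul a (n * 2) ▸ rfl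
      rw [e]
      have h' : z - w ≤ (2 * n) • a := sub_le_comm.mp h
      have := neg_le_neg h'
      have e2 : -(z - w) = w - z := by abel
      rwa [e2] at this
    have haa : a + a = 0 := by
      have h1 : a + a ≤ 0 := by rwa [two_nsmul] at h2a
      have h2 : -a + -a ≤ 0 := by rwa [two_nsmul] at h2a'
      have h3 : 0 ≤ a + a := by
        have := neg_nonneg.mpr h2
        have e : -(-a + -a) = a + a := by abel
        rwa [e] at this
      exact le_antisymm h1 h3
    have : (2 : ℝ) • a = 0 := by rw [two_smul]; exact haa
    have h0 := (smul_eq_zero.mp this).resolve_left (by norm_num)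
    exact h0
  -- P₁ ∘ P₂ = 0
  have hP1P2 : ∀ x : X, P₁ (P₂ x) = 0 := by
    intro x
    apply L2
    have hmem : P₂ x ∈ DisjComp (Set.range P₁) := hranges ▸ Set.mem_range_self x
    exact hmem
  -- pointwise identity on the cone
  have hcone : ∀ x : X, 0 ≤ x → P₁ x + P₂ x = x := by
    intro x hx
    -- upper bound: P₁ x + P₂ x ≤ x
    have hub : P₁ x + P₂ x ≤ x := by
      have hd : Disj (P₂ x) (P₁ x) := by
        have hmem : P₂ x ∈ DisjComp (Set.range P₁) := hranges ▸ Set.mem_range_self x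
        exact hmem (P₁ x) ⟨x, rfl⟩
      unfold Disj at hd
      have hx1 : P₂ x - P₁ x ≤ x := by
        have h := add_le_add (hP₂compl x hx) (hP₁pos x hx)
        have e : x - P₂ x + P₁ x = x - (P₂ x - P₁ x) := by abel
        rw [e] at h
        exact sub_nonneg.mp (by simpa using h)
      have hx2 : P₁ x - P₂ x ≤ x := by
        have h := add_le_add (hP₁compl x hx) (hP₂pos x hx)
        have e : x - P₁ x + P₂ x = x - (P₁ x - P₂ x) := by abel
        rw [e] at h
        exact sub_nonneg.mp (by simpa using h)
      have hmem : x ∈ upperBounds ({P₂ x - P₁ x, P₁ x - P₂ x} : Set X) :=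
        (mem_ub_pair _ _ _).mpr ⟨hx1, hx2⟩
      rw [← hd, mem_ub_pair] at hmem
      have h := hmem.1
      have e : P₂ x + P₁ x = P₁ x + P₂ x := by abel
      rwa [e] at h
    -- lower bound: x ≤ P₁ x + P₂ x
    have hlb : x ≤ P₁ x + P₂ x := by
      set w' := x - P₁ x with hw'def
      have hw' : 0 ≤ w' := hP₁compl x hx
      have hP1w' : P₁ w' = 0 := by
        rw [hw'def, map_sub, hP1idem, sub_self]
      set d := w' - P₂ w' with hddef
      have hd0 : 0 ≤ d := hP₂compl w' hw'
      have hP1d : P₁ d = 0 := by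
        rw [hddef, map_sub, hP1w', hP1P2 w', sub_self]
      have hP2d : P₂ d = 0 := by
        rw [hddef, map_sub, hP2idem, sub_self]
      have hdComp : d ∈ DisjComp (Set.range P₁) := by
        rintro u ⟨y, rfl⟩
        exact L1 d (P₁ y) hP1d (hP1idem y)
      have hdrange : d ∈ Set.range P₂ := hranges ▸ hdComp
      obtain ⟨c, hc⟩ := hdrange
      have hdfix : d = P₂ d := by rw [← hc, hP2idem]
      have hdz : d = 0 := by rw [hdfix, hP2d]
      have hw'fix : w' = P₂ w' := by
        have : w' - P₂ w' = 0 := hdz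
        exact sub_eq_zero.mp this
      have hsplit : P₂ x = w' + P₂ (P₁ x) := by
        have e : x = w' + P₁ x := by rw [hw'def]; abel
        calc P₂ x = P₂ (w' + P₁ x) := by rw [← e]
        _ = P₂ w' + P₂ (P₁ x) := by rw [map_add]
        _ = w' + P₂ (P₁ x) := by rw [← hw'fix]
      have hw'le : w' ≤ P₂ x := by
        rw [hsplit]
        have h := hP₂pos (P₁ x) (hP₁pos x hx)
        exact le_add_of_nonneg_right h
      have : x - P₁ x ≤ P₂ x := hw'le
      have h := add_le_add_right this (P₁ x)
      have e : P₁ x + (x - P₁ x) = x := by abel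
      rwa [e] at h
    exact le_antisymm hub hlb
  -- conclude by the generating cone
  apply LinearMap.ext
  intro x
  obtain ⟨a, b, hA, hB, hab⟩ := hgen x
  have hA' := hcone a hA
  have hB' := hcone b hB
  have hx : (P₁ + P₂) x = (P₁ a + P₂ a) - (P₁ b + P₂ b) := by
    simp only [LinearMap.add_apply, hab, map_sub]
  rw [hx, hA', hB']
  simp [hab]
end
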